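/- In the automaton group of automaton 920, the element b has infinite order: since a^{-1}|_1 = b^{-1}|_1 = b^{-1} and b^{-1}(1) = 1, every b^{-n}(01^∞) is left-shift equivalent to 1^∞, while b(01^∞) = 0^∞, which is not shift-equivalent to 1^∞. -/

import Mathlib

namespace Stmt15


/-- A Mealy automaton over the binary alphabet with state set `S`. -/
structure Mealy (S : Type) where
  /-- transition function -/
  δ : S → Bool → S
  /-- output function -/
  τ : S → Bool → Bool

namespace Mealy

variable {S : Type} (M : Mealy S)

/-- The state reached from `q` after reading the first `n` letters of `w`. -/
def stateAt (q : S) (w : ℕ → Bool) : ℕ → S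
  | 0 => q
  | n + 1 => M.δ (stateAt q w n) (w n)

/-- The action of state `q` on infinite words. -/
def act (q : S) (w : ℕ → Bool) : ℕ → Bool :=
  fun n => M.τ (M.stateAt q w n) (w n)

/-- The inverse automaton (for automata whose output functions are involutions). -/
def inv : Mealy S := ⟨fun q b => M.δ q (M.τ q b), M.τ⟩

theorem stateAt_inv_act (h : ∀ q b, M.τ q (M.τ q b) = b) (q : S) (w : ℕ → Bool) :
    ∀ n, M.inv.stateAt q (M.act q w) n = M.stateAt q w n := by
  intro n
  induction n with
  | zero => rfl
  | succ n ih =>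
    show M.inv.δ (M.inv.stateAt q (M.act q w) n) (M.act q w n) = M.δ (M.stateAt q w n) (w n)
    rw [ih]
    show M.δ (M.stateAt q w n) (M.τ (M.stateAt q w n) (M.τ (M.stateAt q w n) (w n))) = _
    rw [h]

theorem inv_act (h : ∀ q b, M.τ q (M.τ q b) = b) (q : S) (w : ℕ → Bool) :
    M.inv.act q (M.act q w) = w := by
  funext n
  show M.inv.τ (M.inv.stateAt q (M.act q w) n) (M.act q w n) = w n
  rw [stateAt_inv_act M h]
  show M.τ (M.stateAt q w n) (M.τ (M.stateAt q w n) (w n)) = w n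
  rw [h]

theorem inv_inv (h : ∀ q b, M.τ q (M.τ q b) = b) : M.inv.inv = M := by
  obtain ⟨d, t⟩ := M
  simp only [inv]
  congr 1
  funext q b
  exact congrArg (d q) (h q b)

/-- The permutation of the set of infinite binary words defined by state `q`. -/
def perm (h : ∀ q b, M.τ q (M.τ q b) = b) (q : S) : Equiv.Perm (ℕ → Bool) where
  toFun := M.act q
  invFun := M.inv.act q
  left_inv := fun w => M.inv_act h q w
  right_inv := fun w => by
    have h2 : ∀ q b, M.inv.τ q (M.inv.τ q b) = b := h
    have := M.inv.inv_act h2 q w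
    rwa [M.inv_inv h] at this

end Mealy

/-- Prepend a finite word to an infinite word. -/
def cat (u : List Bool) (w : ℕ → Bool) : ℕ → Bool :=
  fun n => u.getD n (w (n - u.length))

/-- The (semantic) restriction of a transformation of infinite words to the
subtree indexed by the finite word `u`. -/
def resW (f : (ℕ → Bool) → ℕ → Bool) (u : List Bool) : (ℕ → Bool) → ℕ → Bool :=
  fun w n => f (cat u w) (n + u.length)

/-- The periodic infinite word with period `u`. -/
def per (u : List Bool) : ℕ → Bool := fun n => u.getD (n % u.length) false

/-- Left-shift equivalence of infinite words: they share a common infinite tail. -/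
def seq (u v : ℕ → Bool) : Prop := ∃ k l : ℕ, ∀ n, u (n + k) = v (n + l)

inductive St : Type
  | a | b | c
deriving DecidableEq

instance instFintypeSt : Fintype St := ⟨{.a, .b, .c}, fun x => by cases x <;> simp⟩

/-- Automaton 920. -/
def M : Mealy St where
  δ := fun q x => match q, x with
    | .a, false => .b | .a, true => .a
    | .b, false => .a | .b, true => .b
    | .c, false => .c | .c, true => .a
  τ := fun q x => match q with
    | .a => !x
    | .b => x
    | .c => x

theorem M_inv : ∀ q x, M.τ q (M.τ q x) = x := by decide

/-- The automorphism of the binary tree boundary defined by state `a`. -/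
def a : Equiv.Perm (ℕ → Bool) := M.perm M_inv .a

/-- The automorphism of the binary tree boundary defined by state `b`. -/
def b : Equiv.Perm (ℕ → Bool) := M.perm M_inv .b

/-- The automorphism of the binary tree boundary defined by state `c`. -/
def c : Equiv.Perm (ℕ → Bool) := M.perm M_inv .c

-- Auxiliary lemmas --------------------------------------------------------

lemma binv_coe : ⇑b⁻¹ = M.inv.act .b := rfl
lemma ainv_coe : ⇑a⁻¹ = M.inv.act .a := rfl
lemma b_coe : ⇑b = M.act .b := rfl

lemma cat_zero (x : Bool) (w : ℕ → Bool) : cat [x] w 0 = x := rfl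

lemma cat_succ (x : Bool) (w : ℕ → Bool) (n : ℕ) : cat [x] w (n + 1) = w n := by
  simp [cat, List.getD]

/-- After reading two `true`s, the inverse automaton is in state `b`. -/
lemma inv_two_true (s : St) : M.inv.δ (M.inv.δ s true) true = St.b := by
  cases s <;> rfl

lemma inv_b_true : M.inv.δ St.b true = St.b := rfl

lemma inv_state_tail (q : St) (w : ℕ → Bool) (k : ℕ) (hw : ∀ m, w (m + k) = true) :
    ∀ m, M.inv.stateAt q w (m + (k + 2)) = St.b := by
  intro m
  induction m with
  | zero =>
    rw [Nat.zero_add]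
    show M.inv.δ (M.inv.δ (M.inv.stateAt q w k) (w k)) (w (k + 1)) = St.b
    have h0 : w k = true := by simpa using hw 0
    have h1 : w (k + 1) = true := by simpa [Nat.add_comm] using hw 1
    rw [h0, h1, inv_two_true]
  | succ m ih =>
    rw [show m + 1 + (k + 2) = (m + (k + 2)) + 1 from by omega]
    show M.inv.δ (M.inv.stateAt q w (m + (k + 2))) (w (m + (k + 2))) = St.b
    have h2 : w (m + (k + 2)) = true := by
      have := hw (m + 2); rwa [show m + 2 + k = m + (k + 2) by omega] at this
    rw [ih, h2, inv_b_true]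

lemma inv_act_tail (q : St) (w : ℕ → Bool) (k : ℕ) (hw : ∀ m, w (m + k) = true) :
    ∀ m, M.inv.act q w (m + (k + 2)) = true := by
  intro m
  show M.inv.τ (M.inv.stateAt q w (m + (k + 2))) (w (m + (k + 2))) = true
  rw [inv_state_tail q w k hw m]
  have h2 : w (m + (k + 2)) = true := by
    have := hw (m + 2); rwa [show m + 2 + k = m + (k + 2) by omega] at this
  rw [h2]; rfl

lemma w0_tail : ∀ m, cat [false] (fun _ => true) (m + 1) = true := by
  intro m; rw [cat_succ]

lemma binv_pow_tail : ∀ n : ℕ, ∃ k : ℕ,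
    ∀ m, ⇑(b⁻¹ ^ n) (cat [false] (fun _ => true)) (m + k) = true := by
  intro n
  induction n with
  | zero => exact ⟨1, by simpa using w0_tail⟩
  | succ n ih =>
    obtain ⟨k, hk⟩ := ih
    refine ⟨k + 2, ?_⟩
    intro m
    have : (b⁻¹ : Equiv.Perm (ℕ → Bool)) ^ (n + 1) = b⁻¹ * b⁻¹ ^ n := by
      rw [pow_succ']
    rw [this, Equiv.Perm.mul_apply, binv_coe]
    exact inv_act_tail .b _ k hk m

lemma resW_part : resW ⇑a⁻¹ [true] = ⇑b⁻¹ := by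
  funext w n
  rw [ainv_coe, binv_coe]
  show M.inv.act .a (cat [true] w) (n + 1) = M.inv.act .b w n
  have hst : ∀ n, M.inv.stateAt .a (cat [true] w) (n + 1) = M.inv.stateAt .b w n := by
    intro n
    induction n with
    | zero => rfl
    | succ n ih =>
      show M.inv.δ (M.inv.stateAt .a (cat [true] w) (n + 1)) (cat [true] w (n + 1)) = _
      rw [ih, cat_succ]; rfl
  show M.inv.τ (M.inv.stateAt .a (cat [true] w) (n + 1)) (cat [true] w (n + 1)) = _
  rw [hst, cat_succ]; rfl

lemma commute_part (w : ℕ → Bool) : ⇑b⁻¹ (cat [true] w) = cat [true] (⇑b⁻¹ w) := by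
  funext n
  rw [binv_coe]
  cases n with
  | zero => rfl
  | succ n =>
    rw [cat_succ]
    have hst : ∀ n, M.inv.stateAt .b (cat [true] w) (n + 1) = M.inv.stateAt .b w n := by
      intro n
      induction n with
      | zero => rfl
      | succ n ih =>
        show M.inv.δ (M.inv.stateAt .b (cat [true] w) (n + 1)) (cat [true] w (n + 1)) = _
        rw [ih, cat_succ]; rfl
    show M.inv.τ (M.inv.stateAt .b (cat [true] w) (n + 1)) (cat [true] w (n + 1)) = _
    rw [hst, cat_succ]; rfl

lemma b_w0 : b (cat [false] (fun _ => true)) = (fun _ => false) := by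
  funext n
  show M.act .b (cat [false] (fun _ => true)) n = false
  have hst : ∀ n, M.stateAt .b (cat [false] (fun _ => true)) (n + 1) = St.a := by
    intro n
    induction n with
    | zero => rfl
    | succ n ih =>
      show M.δ (M.stateAt .b (cat [false] (fun _ => true)) (n + 1)) _ = _
      rw [ih, cat_succ]; rfl
  cases n with
  | zero => rfl
  | succ n =>
    show M.τ (M.stateAt .b (cat [false] (fun _ => true)) (n + 1)) (cat [false] _ (n + 1)) = false
    rw [hst, cat_succ]; rfl

/-- In the automaton group of automaton 920, the element `b` has infinite order:
`a⁻¹|₁ = b⁻¹|₁ = b⁻¹` and `b⁻¹(1) = 1`, so every `b⁻ⁿ(01^∞)` is left-shift equivalent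
to `1^∞`, while `b(01^∞) = 0^∞`, which is not shift-equivalent to `1^∞`. -/
theorem automaton920_b_infinite_order :
    (resW ⇑a⁻¹ [true] = ⇑b⁻¹) ∧
    (∀ w : ℕ → Bool, ⇑b⁻¹ (cat [true] w) = cat [true] (⇑b⁻¹ w)) ∧
    (∀ n : ℕ, seq (⇑(b⁻¹ ^ n) (cat [false] (fun _ => true))) (fun _ => true)) ∧
    (b (cat [false] (fun _ => true)) = (fun _ => false)) ∧
    ¬ seq (fun _ => false) (fun _ => true) ∧
    (∀ n : ℕ, 1 ≤ n → b ^ n ≠ 1) := by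
  have hseq : ∀ n : ℕ, seq (⇑(b⁻¹ ^ n) (cat [false] (fun _ => true))) (fun _ => true) := by
    intro n
    obtain ⟨k, hk⟩ := binv_pow_tail n
    exact ⟨k, 0, fun m => by rw [hk m]⟩
  have hns : ¬ seq (fun _ => false) (fun _ => true) := by
    rintro ⟨k, l, h⟩
    simpa using h 0
  refine ⟨resW_part, commute_part, hseq, b_w0, hns, ?_⟩
  intro n hn h
  obtain ⟨m, rfl⟩ : ∃ m, n = m + 1 := ⟨n - 1, by omega⟩
  have hb : b = (b⁻¹) ^ m := by
    rw [inv_pow]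
    exact eq_inv_of_mul_eq_one_left (by rw [← pow_succ']; exact h)
  have := hseq m
  rw [← hb, b_w0] at this
  exact hns this

end Stmt15
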